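/- For all a, b ∈ K(X,G), the following are equivalent: (i) a ≼ b; (ii) (a − ε)_+ ≼ b for all ε > 0; (iii) for all ε > 0 there exists δ > 0 such that (a − ε)_+ ≼ (b − δ)_+. -/

import Mathlib

open scoped Pointwise NNReal ENNReal

variable {X : Type*} [TopologicalSpace X] {G : Type*} [Group G] [MulAction G X]

/-- The open support of a continuous `ℝ≥0`-valued function. -/
def osupp (f : C(X, ℝ≥0)) : Set X := {x | f x ≠ 0}

/-- Dynamical subequivalence `A ≼ B` for two finite tuples (lists) of subsets of `X`. -/
def SetSubeq (G : Type*) [Group G] [MulAction G X] (A B : List (Set X)) : Prop :=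
  ∀ F : Fin A.length → Set X,
    (∀ i, IsClosed (F i) ∧ F i ⊆ A.get i) →
    ∃ (J : Fin A.length → ℕ)
      (U : (i : Fin A.length) → Fin (J i) → Set X)
      (s : (i : Fin A.length) → Fin (J i) → G)
      (k : (i : Fin A.length) → Fin (J i) → Fin B.length),
      (∀ i j, IsOpen (U i j)) ∧
      (∀ i, F i ⊆ ⋃ j, U i j) ∧
      (∀ i j, (s i j) • U i j ⊆ B.get (k i j)) ∧
      (∀ (p q : Σ i : Fin A.length, Fin (J i)), p ≠ q → k p.1 p.2 = k q.1 q.2 →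
        Disjoint ((s p.1 p.2) • U p.1 p.2) ((s q.1 q.2) • U q.1 q.2))

/-- Dynamical subequivalence `a ≼ b` for tuples of nonnegative continuous functions. -/
def DynSubeq (G : Type*) [Group G] [MulAction G X] (a b : List C(X, ℝ≥0)) : Prop :=
  SetSubeq G (a.map osupp) (b.map osupp)

/-- The entrywise cut-down `(f - ε)₊`. -/
noncomputable def cutFun (f : C(X, ℝ≥0)) (ε : ℝ≥0) : C(X, ℝ≥0) :=
  ⟨fun x => f x - ε, f.continuous.sub continuous_const⟩

noncomputable def cutList (a : List C(X, ℝ≥0)) (ε : ℝ≥0) : List C(X, ℝ≥0) := a.map (cutFun · ε)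

section Prop32Helpers

def CoverData (G : Type*) [Group G] [MulAction G X] (n : ℕ) (F : Fin n → Set X)
    (B : List (Set X)) : Prop :=
  ∃ (J : Fin n → ℕ)
    (U : (i : Fin n) → Fin (J i) → Set X)
    (s : (i : Fin n) → Fin (J i) → G)
    (k : (i : Fin n) → Fin (J i) → Fin B.length),
    (∀ i j, IsOpen (U i j)) ∧
    (∀ i, F i ⊆ ⋃ j, U i j) ∧
    (∀ i j, (s i j) • U i j ⊆ B.get (k i j)) ∧
    (∀ (p q : Σ i : Fin n, Fin (J i)), p ≠ q → k p.1 p.2 = k q.1 q.2 →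
      Disjoint ((s p.1 p.2) • U p.1 p.2) ((s q.1 q.2) • U q.1 q.2))

lemma sigma_cast_inj {n n' : ℕ} (h : n' = n) {J : Fin n → ℕ}
    {p q : Σ i : Fin n', Fin (J (Fin.cast h i))}
    (hpq : (⟨Fin.cast h p.1, p.2⟩ : Σ i : Fin n, Fin (J i)) = ⟨Fin.cast h q.1, q.2⟩) :
    p = q := by
  obtain ⟨h1, h2⟩ := Sigma.mk.inj_iff.mp hpq
  have h1' : p.1 = q.1 := Fin.cast_injective h h1
  obtain ⟨p1, p2⟩ := p
  obtain ⟨q1, q2⟩ := q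
  dsimp at h1' h2
  subst h1'
  rw [eq_of_heq h2]

lemma coverData_comp_cast {n n' : ℕ} (h : n' = n) {F : Fin n → Set X} {B : List (Set X)}
    (hF : CoverData G n F B) : CoverData G n' (fun i => F (Fin.cast h i)) B := by
  obtain ⟨J, U, s, k, hopen, hcov, hsub, hdisj⟩ := hF
  refine ⟨fun i => J (Fin.cast h i), fun i => U (Fin.cast h i), fun i => s (Fin.cast h i),
    fun i => k (Fin.cast h i), fun i j => hopen _ j, fun i => hcov _, fun i j => hsub _ j, ?_⟩
  intro p q hpq hk
  exact hdisj ⟨Fin.cast h p.1, p.2⟩ ⟨Fin.cast h q.1, q.2⟩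
    (fun hc => hpq (sigma_cast_inj h hc)) hk

lemma CoverData.mono_right {n : ℕ} {F : Fin n → Set X} {B B' : List (Set X)}
    (h : B'.length = B.length)
    (hsub : ∀ i : Fin B'.length, B'.get i ⊆ B.get (Fin.cast h i))
    (hd : CoverData G n F B') : CoverData G n F B := by
  obtain ⟨J, U, s, k, hopen, hcov, hsubU, hdisj⟩ := hd
  refine ⟨J, U, s, fun i j => Fin.cast h (k i j), hopen, hcov,
    fun i j => (hsubU i j).trans (hsub _), ?_⟩
  intro p q hpq hk
  exact hdisj p q hpq (Fin.cast_injective h hk)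

lemma exists_pos_forall_le {ι : Type*} [Fintype ι] (f : ι → ℝ≥0) (hf : ∀ i, 0 < f i) :
    ∃ δ : ℝ≥0, 0 < δ ∧ ∀ i, δ ≤ f i := by
  cases isEmpty_or_nonempty ι with
  | inl h => exact ⟨1, one_pos, fun i => isEmptyElim i⟩
  | inr h =>
    refine ⟨Finset.univ.inf' Finset.univ_nonempty f, ?_,
      fun i => Finset.inf'_le f (Finset.mem_univ i)⟩
    exact (Finset.lt_inf'_iff _).mpr fun i _ => hf i

lemma osupp_cutFun (f : C(X, ℝ≥0)) (ε : ℝ≥0) : osupp (cutFun f ε) = {x | ε < f x} := by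
  ext x
  simp only [osupp, cutFun, ContinuousMap.coe_mk, Set.mem_setOf_eq, ← pos_iff_ne_zero,
    tsub_pos_iff_lt]

lemma exists_lt_on_compact {K : Set X} (hK : IsCompact K) (f : C(X, ℝ≥0))
    (hpos : ∀ x ∈ K, f x ≠ 0) : ∃ c : ℝ≥0, 0 < c ∧ ∀ x ∈ K, c < f x := by
  rcases K.eq_empty_or_nonempty with rfl | hne
  · exact ⟨1, one_pos, fun x hx => absurd hx (Set.notMem_empty x)⟩
  obtain ⟨x0, hx0, hmin⟩ := hK.exists_isMinOn hne f.continuous.continuousOn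
  refine ⟨f x0 / 2, ?_, fun x hx => lt_of_lt_of_le (NNReal.half_lt_self (hpos x0 hx0)) (hmin hx)⟩
  exact half_pos (pos_iff_ne_zero.mpr (hpos x0 hx0))

lemma get_map_osupp (l : List C(X, ℝ≥0)) (i : Fin (l.map osupp).length) :
    (l.map osupp).get i = osupp (l.get (Fin.cast (List.length_map osupp) i)) := by
  simp [List.get_eq_getElem, List.getElem_map]

lemma length_cut_map (a : List C(X, ℝ≥0)) (ε : ℝ≥0) :
    ((cutList a ε).map osupp).length = (a.map osupp).length := by simp [cutList]

lemma get_cut_map_osupp (l : List C(X, ℝ≥0)) (ε : ℝ≥0)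
    (i : Fin ((cutList l ε).map osupp).length) {hi : (i : ℕ) < l.length} :
    ((cutList l ε).map osupp).get i = {x | ε < l.get ⟨i, hi⟩ x} := by
  rw [List.get_eq_getElem]
  simp [List.getElem_map, cutList, ← osupp_cutFun]

-- (i) → (ii)
lemma dynSubeq_cut_left {a b : List C(X, ℝ≥0)} (h : DynSubeq G a b) (ε : ℝ≥0) :
    DynSubeq G (cutList a ε) b := by
  intro F hF
  have e : ((cutList a ε).map osupp).length = (a.map osupp).length := length_cut_map a ε
  have hF' : ∀ i : Fin (a.map osupp).length,
      IsClosed (F (Fin.cast e.symm i)) ∧ F (Fin.cast e.symm i) ⊆ (a.map osupp).get i := by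
    intro i
    refine ⟨(hF _).1, (hF _).2.trans ?_⟩
    rw [get_cut_map_osupp (hi := show (i : ℕ) < a.length by simpa using i.2), get_map_osupp]
    intro x hx
    exact (lt_of_le_of_lt (zero_le (a := ε)) hx).ne'
  exact coverData_comp_cast e (h _ hF')

-- (iii at ε) → (ii at ε)
lemma dynSubeq_of_cut_right {c b : List C(X, ℝ≥0)} {δ : ℝ≥0}
    (h : DynSubeq G c (cutList b δ)) : DynSubeq G c b := by
  intro F hF
  have e : ((cutList b δ).map osupp).length = (b.map osupp).length := length_cut_map b δ
  refine CoverData.mono_right e ?_ (h F hF)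
  intro i
  rw [get_cut_map_osupp (hi := show (i : ℕ) < b.length by simpa [cutList] using i.2),
    get_map_osupp]
  intro x hx
  exact (lt_of_le_of_lt (zero_le (a := δ)) hx).ne'

-- (ii) → (i)
lemma dynSubeq_of_forall_cut [CompactSpace X] {a b : List C(X, ℝ≥0)}
    (h : ∀ ε : ℝ≥0, 0 < ε → DynSubeq G (cutList a ε) b) : DynSubeq G a b := by
  intro F hF
  have key : ∀ i : Fin (a.map osupp).length, ∃ c : ℝ≥0, 0 < c ∧
      ∀ x ∈ F i, c < (a.get (Fin.cast (List.length_map osupp) i)) x := by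
    intro i
    refine exists_lt_on_compact (hF i).1.isCompact _ ?_
    intro x hx
    have := (hF i).2 hx
    rwa [get_map_osupp] at this
  choose c hc1 hc2 using key
  obtain ⟨ε, hε, hεle⟩ := exists_pos_forall_le c hc1
  have e : ((cutList a ε).map osupp).length = (a.map osupp).length := length_cut_map a ε
  have cond : ∀ i : Fin ((cutList a ε).map osupp).length,
      IsClosed (F (Fin.cast e i)) ∧ F (Fin.cast e i) ⊆ ((cutList a ε).map osupp).get i := by
    intro i
    refine ⟨(hF _).1, ?_⟩
    rw [get_cut_map_osupp (hi := show (i : ℕ) < a.length by simpa [cutList] using i.2)]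
    intro x hx
    exact lt_of_le_of_lt (hεle (Fin.cast e i)) (hc2 (Fin.cast e i) x hx)
  exact coverData_comp_cast e.symm (h ε hε _ cond)

-- (i) → (iii)
lemma dynSubeq_cut_cut [CompactSpace X] [T2Space X]
    (hG : ∀ g : G, Continuous fun x : X => g • x)
    {a b : List C(X, ℝ≥0)} (h : DynSubeq G a b) {ε : ℝ≥0} (hε : 0 < ε) :
    ∃ δ : ℝ≥0, 0 < δ ∧ DynSubeq G (cutList a ε) (cutList b δ) := by
  have ha : (a.map osupp).length = a.length := List.length_map osupp
  have hb : (b.map osupp).length = b.length := List.length_map osupp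
  set Fm : Fin (a.map osupp).length → Set X :=
    fun i => {x | ε ≤ (a.get (Fin.cast ha i)) x} with hFmdef
  have hFmc : ∀ i, IsClosed (Fm i) :=
    fun i => isClosed_le continuous_const (a.get (Fin.cast ha i)).continuous
  have hFms : ∀ i, Fm i ⊆ (a.map osupp).get i := by
    intro i x hx
    rw [get_map_osupp]
    exact (lt_of_lt_of_le hε hx).ne'
  obtain ⟨J, U, s, k, hopen, hcov, hsub, hdisj⟩ := h Fm fun i => ⟨hFmc i, hFms i⟩
  have shrink : ∀ i, ∃ v : Fin (J i) → Set X,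
      Fm i ⊆ Set.iUnion v ∧ (∀ j, IsOpen (v j)) ∧ ∀ j, closure (v j) ⊆ U i j :=
    fun i => exists_subset_iUnion_closure_subset (hFmc i) (hopen i)
      (fun x _ => Set.toFinite _) (hcov i)
  choose v hvcov hvopen hvcl using shrink
  have key : ∀ p : Σ i : Fin (a.map osupp).length, Fin (J i), ∃ c : ℝ≥0, 0 < c ∧
      ∀ x ∈ (s p.1 p.2) • closure (v p.1 p.2), c < (b.get (Fin.cast hb (k p.1 p.2))) x := by
    intro p
    refine exists_lt_on_compact ?_ _ ?_
    · rw [← Set.image_smul]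
      exact (isClosed_closure.isCompact).image (hG _)
    · intro x hx
      have := hsub p.1 p.2 (Set.smul_set_mono (hvcl p.1 p.2) hx)
      rwa [get_map_osupp] at this
  choose c hc1 hc2 using key
  obtain ⟨δ, hδ, hδle⟩ := exists_pos_forall_le c hc1
  refine ⟨δ, hδ, ?_⟩
  intro F hF
  have e : ((cutList a ε).map osupp).length = (a.map osupp).length := length_cut_map a ε
  have e2 : ((cutList b δ).map osupp).length = (b.map osupp).length := length_cut_map b δ
  refine ⟨fun i => J (Fin.cast e i), fun i j => v (Fin.cast e i) j, fun i j => s (Fin.cast e i) j,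
    fun i j => Fin.cast e2.symm (k (Fin.cast e i) j), fun i j => hvopen _ j, ?_, ?_, ?_⟩
  · intro i
    refine ((hF i).2).trans (Set.Subset.trans ?_ (hvcov (Fin.cast e i)))
    rw [get_cut_map_osupp (hi := show (i : ℕ) < a.length by simpa [cutList] using i.2)]
    intro x hx
    show ε ≤ (a.get (Fin.cast ha (Fin.cast e i))) x
    exact le_of_lt hx
  · intro i j x hx
    rw [get_cut_map_osupp (l := b)
      (hi := show ((k (Fin.cast e i) j : Fin _) : ℕ) < b.length by
        simpa using (k (Fin.cast e i) j).2)]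
    have hx' : x ∈ (s (Fin.cast e i) j) • closure (v (Fin.cast e i) j) :=
      Set.smul_set_mono subset_closure hx
    exact lt_of_le_of_lt (hδle ⟨Fin.cast e i, j⟩) (hc2 ⟨Fin.cast e i, j⟩ x hx')
  · intro p q hpq hk
    have hk' : k (Fin.cast e p.1) p.2 = k (Fin.cast e q.1) q.2 := Fin.cast_injective e2.symm hk
    exact Disjoint.mono (Set.smul_set_mono ((subset_closure).trans (hvcl _ _)))
      (Set.smul_set_mono ((subset_closure).trans (hvcl _ _)))
      (hdisj ⟨Fin.cast e p.1, p.2⟩ ⟨Fin.cast e q.1, q.2⟩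
        (fun hc => hpq (sigma_cast_inj e hc)) hk')

end Prop32Helpers

/-- Membership in the algebra of sets generated by the open sets of `X`. -/
def InAlg (X : Type*) [TopologicalSpace X] (s : Set X) : Prop :=
  s ∈ MeasureTheory.generateSetAlgebra {t : Set X | IsOpen t}

/-- A `G`-invariant regular premeasure on the algebra generated by the open sets. -/
structure InvRegPremeasure (X : Type*) [TopologicalSpace X] (G : Type*) [Group G]
    [MulAction G X] where
  m : Set X → ℝ≥0∞
  junk : ∀ s : Set X, ¬ InAlg X s → m s = 0
  empty' : m ∅ = 0
  countably_additive : ∀ A : ℕ → Set X, (∀ n, InAlg X (A n)) →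
    Pairwise (Function.onFun Disjoint A) → InAlg X (⋃ n, A n) →
    m (⋃ n, A n) = ∑' n, m (A n)
  invariant : ∀ (g : G) (s : Set X), InAlg X s → m (g • s) = m s
  inner_regular : ∀ s : Set X, InAlg X s →
    m s = ⨆ (F : Set X) (_ : IsCompact F ∧ F ⊆ s), m F
  outer_regular : ∀ s : Set X, InAlg X s →
    m s = ⨅ (O : Set X) (_ : IsOpen O ∧ s ⊆ O), m O

/-- A state on the generalized type semigroup `W(X, G)`, described at the level of
`K(X, G)`: a function on tuples which is monotone for `≼`, additive for concatenation,
and vanishes on the empty tuple. -/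
structure DynState (X : Type*) [TopologicalSpace X] (G : Type*) [Group G]
    [MulAction G X] where
  toFun : List C(X, ℝ≥0) → ℝ≥0∞
  mono : ∀ a b, DynSubeq G a b → toFun a ≤ toFun b
  additive : ∀ a b, toFun (a ++ b) = toFun a + toFun b
  zero' : toFun [] = 0

/-- Lower semicontinuity of a state. -/
def DynState.LSC (D : DynState X G) : Prop :=
  ∀ a, D.toFun a = ⨆ (ε : ℝ≥0) (_ : 0 < ε), D.toFun (cutList a ε)

/-- **Proposition 3.2.** For `a, b ∈ K(X, G)`: `a ≼ b` iff `(a - ε)₊ ≼ b` for all `ε > 0`,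
iff for all `ε > 0` there exists `δ > 0` with `(a - ε)₊ ≼ (b - δ)₊`. -/
theorem dynSubeq_cutdown_characterization {X : Type*} [TopologicalSpace X] [CompactSpace X]
    [T2Space X] [TopologicalSpace.MetrizableSpace X]
    {G : Type*} [Group G] [MulAction G X]
    (hG : ∀ g : G, Continuous fun x : X => g • x)
    (a b : List C(X, ℝ≥0)) :
    (DynSubeq G a b ↔ ∀ ε : ℝ≥0, 0 < ε → DynSubeq G (cutList a ε) b) ∧
    (DynSubeq G a b ↔ ∀ ε : ℝ≥0, 0 < ε → ∃ δ : ℝ≥0, 0 < δ ∧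
      DynSubeq G (cutList a ε) (cutList b δ)) := by
  constructor
  · constructor
    · intro h ε hε
      exact dynSubeq_cut_left h ε
    · intro h
      exact dynSubeq_of_forall_cut h
  · constructor
    · intro h ε hε
      exact dynSubeq_cut_cut hG h hε
    · intro h
      refine dynSubeq_of_forall_cut fun ε hε => ?_
      obtain ⟨δ, hδ, hd⟩ := h ε hε
      exact dynSubeq_of_cut_right hd
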